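/- The modified update of Resolution (2e) never decreases net sequence numbers: for every routing table rt, every entry r satisfying the preconditions of update₂ₑ, and every destination dip ∈ IP, one has nsqn(rt,dip) ≤ nsqn(update₂ₑ(rt,r),dip). -/

import Mathlib

open Classical

noncomputable section

inductive K where
  | kno
  | unk
  deriving DecidableEq

inductive F where
  | val
  | inv
  deriving DecidableEq

/-- A routing table entry: destination, destination sequence number,
sequence-number-status flag, validity flag, hop count, next hop, precursors. -/
structure Entry (IP : Type) where
  dip : IP
  dsn : ℕ
  dsk : K
  flag : F
  hops : ℕ
  nhip : IP
  pre : Set IP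

variable {IP : Type}

/-- At most one entry per destination. -/
def isRT (rt : Set (Entry IP)) : Prop :=
  ∀ r ∈ rt, ∀ s ∈ rt, r.dip = s.dip → r = s

def kD (rt : Set (Entry IP)) : Set IP := {d | ∃ r ∈ rt, r.dip = d}

def vD (rt : Set (Entry IP)) : Set IP := {d | ∃ r ∈ rt, r.dip = d ∧ r.flag = F.val}

def iD (rt : Set (Entry IP)) : Set IP := {d | ∃ r ∈ rt, r.dip = d ∧ r.flag = F.inv}

/-- The entry of `rt` for destination `d`, when it exists. -/
def sigmaRoute (rt : Set (Entry IP)) (d : IP) : Option (Entry IP) :=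
  if h : ∃ r ∈ rt, r.dip = d then some h.choose else none

def sqn (rt : Set (Entry IP)) (d : IP) : ℕ :=
  ((sigmaRoute rt d).map Entry.dsn).getD 0

def flagRT (rt : Set (Entry IP)) (d : IP) : Option F :=
  (sigmaRoute rt d).map Entry.flag

def dhops (rt : Set (Entry IP)) (d : IP) : ℕ :=
  ((sigmaRoute rt d).map Entry.hops).getD 0

/-- Net sequence number of an entry. -/
def nsqnE (r : Entry IP) : ℕ :=
  if r.flag = F.val ∨ r.dsn = 0 then r.dsn else r.dsn - 1

def nsqn (rt : Set (Entry IP)) (d : IP) : ℕ :=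
  ((sigmaRoute rt d).map nsqnE).getD 0

def inc (n : ℕ) : ℕ := if n = 0 then 0 else n + 1

/-- The quality preorder `rt ⊑_d rt'`. -/
def rtLe (d : IP) (rt rt' : Set (Entry IP)) : Prop :=
  nsqn rt d < nsqn rt' d ∨ (nsqn rt d = nsqn rt' d ∧ dhops rt d ≥ dhops rt' d)

/-- The quality equivalence `rt ≈_d rt'`. -/
def rtEquiv (d : IP) (rt rt' : Set (Entry IP)) : Prop :=
  rtLe d rt rt' ∧ rtLe d rt' rt

/-- The strict quality order `rt ⊏_d rt'`. -/
def rtLt (d : IP) (rt rt' : Set (Entry IP)) : Prop :=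
  rtLe d rt rt' ∧ ¬ rtEquiv d rt rt'

/-- Add precursors to an entry. -/
def addpre (r : Entry IP) (npre : Set IP) : Entry IP := { r with pre := r.pre ∪ npre }

/-- Preconditions of `update`. -/
def updPre (r : Entry IP) : Prop :=
  r.flag = F.val ∧ (r.dsn = 0 ↔ r.dsk = K.unk) ∧ (r.dsk = K.unk → r.hops = 1)

/-- The update function on routing tables. -/
def update (rt : Set (Entry IP)) (r : Entry IP) : Set (Entry IP) :=
  if h : ∃ s ∈ rt, s.dip = r.dip then
    let s := h.choose
    let nrt := rt \ {s}
    let nr := addpre r s.pre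
    let nr' := { nr with dsn := s.dsn }
    let ns := addpre s r.pre
    if sqn rt r.dip < r.dsn ∨ (sqn rt r.dip = r.dsn ∧ dhops rt r.dip > r.hops)
        ∨ (sqn rt r.dip = r.dsn ∧ flagRT rt r.dip = some F.inv) then
      nrt ∪ {nr}
    else if r.dsk = K.unk then nrt ∪ {nr'}
    else nrt ∪ {ns}
  else rt ∪ {r}

/-- `dests` is a partial function IP ⇀ ℕ. -/
def isPartialFn (dests : Set (IP × ℕ)) : Prop :=
  ∀ p ∈ dests, ∀ q ∈ dests, p.1 = q.1 → p.2 = q.2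

/-- The invalidate function on routing tables. -/
def invalidate (rt : Set (Entry IP)) (dests : Set (IP × ℕ)) : Set (Entry IP) :=
  (fun r => if h : ∃ rsn, (r.dip, rsn) ∈ dests then
      { r with dsn := h.choose, flag := F.inv } else r) '' rt

/-- Adding precursors to the entry for a given destination. -/
def addprecRT (rt : Set (Entry IP)) (d : IP) (npre : Set IP) : Set (Entry IP) :=
  if h : ∃ s ∈ rt, s.dip = d then (rt \ {h.choose}) ∪ {addpre h.choose npre} else rt

/-- The modified update function of Resolution (2e). -/
def update2e (rt : Set (Entry IP)) (r : Entry IP) : Set (Entry IP) :=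
  if h : ∃ s ∈ rt, s.dip = r.dip then
    let s := h.choose
    let nrt := rt \ {s}
    let nr := addpre r s.pre
    let nr2 := { nr with dsn := s.dsn, dsk := s.dsk }
    let nr3 := { nr with dsn := s.dsn - 1, dsk := s.dsk }
    let ns := addpre s r.pre
    if sqn rt r.dip < r.dsn
        ∨ (sqn rt r.dip = r.dsn ∧ dhops rt r.dip > r.hops ∧ r.dsk = K.kno)
        ∨ (sqn rt r.dip = r.dsn ∧ flagRT rt r.dip = some F.inv ∧ r.dsk = K.kno) then
      nrt ∪ {nr}
    else if r.dsk = K.unk ∧ flagRT rt r.dip = some F.val then nrt ∪ {nr2}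
    else if r.dsk = K.unk ∧ flagRT rt r.dip = some F.inv then nrt ∪ {nr3}
    else nrt ∪ {ns}
  else rt ∪ {r}

lemma sigma_some {IP : Type} {rt : Set (Entry IP)} (hrt : isRT rt) {s : Entry IP}
    (hs : s ∈ rt) : sigmaRoute rt s.dip = some s := by
  have h : ∃ t ∈ rt, t.dip = s.dip := ⟨s, hs, rfl⟩
  rw [sigmaRoute, dif_pos h]
  exact congrArg some (hrt _ h.choose_spec.1 _ hs h.choose_spec.2)

lemma isRT_repl {IP : Type} {rt : Set (Entry IP)} (hrt : isRT rt) {s X : Entry IP}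
    (hs : s ∈ rt) (hX : X.dip = s.dip) : isRT ((rt \ {s}) ∪ {X}) := by
  intro a ha b hb hab
  rcases ha with ⟨ha, hans⟩ | ha
  · rcases hb with ⟨hb, hbns⟩ | hb
    · exact hrt a ha b hb hab
    · simp only [Set.mem_singleton_iff] at hb; subst hb
      exact absurd (hrt a ha s hs (hab.trans hX)) (by simpa using hans)
  · simp only [Set.mem_singleton_iff] at ha; subst ha
    rcases hb with ⟨hb, hbns⟩ | hb
    · exact absurd (hrt b hb s hs (hab.symm.trans hX)) (by simpa using hbns)
    · simpa using hb.symm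

lemma nsqn_repl {IP : Type} {rt : Set (Entry IP)} (hrt : isRT rt) {s X : Entry IP}
    (hs : s ∈ rt) (hX : X.dip = s.dip) :
    nsqn ((rt \ {s}) ∪ {X}) X.dip = nsqnE X := by
  have := sigma_some (isRT_repl hrt hs hX) (Set.mem_union_right _ rfl)
  rw [nsqn, this]; rfl

lemma nsqn_repl_other {IP : Type} {rt : Set (Entry IP)} (hrt : isRT rt) {s X u : Entry IP}
    (hs : s ∈ rt) (hX : X.dip = s.dip) (hu : u ∈ rt) (hne : u.dip ≠ s.dip) :
    nsqn ((rt \ {s}) ∪ {X}) u.dip = nsqnE u := by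
  have hus : u ≠ s := fun e => hne (e ▸ rfl)
  have := sigma_some (isRT_repl hrt hs hX)
    (Set.mem_union_left _ ⟨hu, by simpa using hus⟩)
  rw [nsqn, this]; rfl

/-- The modified update of Resolution (2e) never decreases net sequence numbers. -/
theorem update2e_nsqn_mono (IP : Type) (rt : Set (Entry IP)) (hrt : isRT rt)
    (r : Entry IP) (hr : updPre r) (dip : IP) :
    nsqn rt dip ≤ nsqn (update2e rt r) dip := by
  by_cases hu : ∃ u ∈ rt, u.dip = dip
  case neg =>
    have h0 : nsqn rt dip = 0 := by
      rw [nsqn, sigmaRoute, dif_neg hu]; rfl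
    rw [h0]; exact Nat.zero_le _
  obtain ⟨u, hu, hud⟩ := hu
  have hsu : sigmaRoute rt dip = some u := hud ▸ sigma_some hrt hu
  have hnu : nsqn rt dip = nsqnE u := by simp [nsqn, hsu]
  rw [hnu]
  by_cases h : ∃ s ∈ rt, s.dip = r.dip
  · rw [update2e, dif_pos h]
    have hs : h.choose ∈ rt := h.choose_spec.1
    have hsd : h.choose.dip = r.dip := h.choose_spec.2
    set s := h.choose with hsdef
    have hsig : sigmaRoute rt r.dip = some s := hsd ▸ sigma_some hrt hs
    have hsq : sqn rt r.dip = s.dsn := by simp [sqn, hsig]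
    have hfl : flagRT rt r.dip = some s.flag := by simp [flagRT, hsig]
    have hrval : r.flag = F.val := hr.1
    by_cases hdip : dip = r.dip
    · subst hdip
      have hus : u = s := hrt u hu s hs (hud.trans hsd.symm)
      subst hus
      split_ifs with h1 h2 h3
      · refine le_trans ?_ (le_of_eq (nsqn_repl hrt hs
          (show (addpre r s.pre).dip = s.dip from hsd.symm)).symm)
        have hx : nsqnE (addpre r s.pre) = r.dsn := by simp [nsqnE, addpre, hrval]
        rw [hx]
        rw [hsq] at h1
        have hle : s.dsn ≤ r.dsn := by rcases h1 with h | ⟨h, _⟩ | ⟨h, _⟩ <;> omega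
        unfold nsqnE
        split <;> omega
      · refine le_trans ?_ (le_of_eq (nsqn_repl hrt hs
          (show ({ addpre r s.pre with dsn := s.dsn, dsk := s.dsk } : Entry IP).dip = s.dip
            from hsd.symm)).symm)
        have hx : nsqnE ({ addpre r s.pre with dsn := s.dsn, dsk := s.dsk } : Entry IP) = s.dsn := by
          simp [nsqnE, addpre, hrval]
        rw [hx]
        unfold nsqnE; split <;> omega
      · have hsf : s.flag = F.inv := by
          rw [hfl] at h3
          exact Option.some_injective _ h3.2
        refine le_trans ?_ (le_of_eq (nsqn_repl hrt hs
          (show ({ addpre r s.pre with dsn := s.dsn - 1, dsk := s.dsk } : Entry IP).dip = s.dip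
            from hsd.symm)).symm)
        have hx : nsqnE ({ addpre r s.pre with dsn := s.dsn - 1, dsk := s.dsk } : Entry IP)
            = s.dsn - 1 := by simp [nsqnE, addpre, hrval]
        rw [hx]
        unfold nsqnE
        split
        · rename_i hc
          rcases hc with hc | hc
          · rw [hsf] at hc; exact absurd hc (by simp)
          · omega
        · exact le_refl _
      · conv_rhs => rw [← hsd]
        refine le_trans ?_ (le_of_eq (nsqn_repl hrt hs
          (show (addpre s r.pre).dip = s.dip from rfl)).symm)
        simp [nsqnE, addpre]
        exact (ite_congr rfl (fun _ => rfl) (fun _ => rfl)).le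
    · have hne : u.dip ≠ s.dip := fun e => hdip (hud.symm.trans (e.trans hsd))
      rw [← hud]
      split_ifs with h1 h2 h3
      · rw [nsqn_repl_other hrt hs (show (addpre r s.pre).dip = s.dip from hsd.symm) hu hne]
      · rw [nsqn_repl_other hrt hs
          (show ({ addpre r s.pre with dsn := s.dsn, dsk := s.dsk } : Entry IP).dip = s.dip
            from hsd.symm) hu hne]
      · rw [nsqn_repl_other hrt hs
          (show ({ addpre r s.pre with dsn := s.dsn - 1, dsk := s.dsk } : Entry IP).dip = s.dip
            from hsd.symm) hu hne]
      · rw [nsqn_repl_other hrt hs (show (addpre s r.pre).dip = s.dip from rfl) hu hne]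
  · rw [update2e, dif_neg h]
    have hRT : isRT (rt ∪ {r}) := by
      intro a ha b hb hab
      rcases ha with ha | ha
      · rcases hb with hb | hb
        · exact hrt a ha b hb hab
        · simp only [Set.mem_singleton_iff] at hb; subst hb
          exact absurd ⟨a, ha, hab⟩ h
      · simp only [Set.mem_singleton_iff] at ha; subst ha
        rcases hb with hb | hb
        · exact absurd ⟨b, hb, hab.symm⟩ h
        · simpa using hb.symm
    have := sigma_some hRT (Set.mem_union_left _ hu)
    rw [hud] at this
    rw [nsqn, this]; exact le_refl _

end
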